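/- Let p be an even positive integer with ∫_S |φ|^p dπ < ∞, and suppose ν(φ^k) = 0 for every odd integer k < p. Then E[μ(φ)^p] ≥ ν(φ^p). -/

import Mathlib

open MeasureTheory ProbabilityTheory

lemma aux_summable (x : ℝ) (p : ℕ) :
    Summable (fun n : ℕ => (n : ℝ) ^ p * x ^ n / (n.factorial : ℝ)) := by
  induction p using Nat.strong_induction_on with
  | _ p ih =>
    match p with
    | 0 => simpa using Real.summable_pow_div_factorial x
    | (q + 1) =>
      rw [← summable_nat_add_iff 1]
      have heq : (fun n : ℕ => ((n + 1 : ℕ) : ℝ) ^ (q + 1) * x ^ (n + 1) / ((n + 1).factorial : ℝ))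
          = fun n : ℕ => ∑ j ∈ Finset.range (q + 1),
              (q.choose j : ℝ) * x * ((n : ℝ) ^ j * x ^ n / (n.factorial : ℝ)) := by
        funext n
        have h1 : ((n : ℝ) + 1) ^ q = ∑ j ∈ Finset.range (q + 1),
            (n : ℝ) ^ j * 1 ^ (q - j) * (q.choose j : ℝ) := add_pow _ _ _
        have hfac : ((n + 1).factorial : ℝ) = ((n : ℝ) + 1) * (n.factorial : ℝ) := by
          rw [Nat.factorial_succ]; push_cast; ring
        have hne : ((n : ℝ) + 1) ≠ 0 := by positivity
        have hfn : ((n.factorial : ℝ)) ≠ 0 := by positivity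
        have h2 : ∑ j ∈ Finset.range (q + 1),
            (q.choose j : ℝ) * x * ((n : ℝ) ^ j * x ^ n / (n.factorial : ℝ))
            = ((n : ℝ) + 1) ^ q * (x * x ^ n) / (n.factorial : ℝ) := by
          rw [h1, Finset.sum_mul, Finset.sum_div]
          exact Finset.sum_congr rfl fun j hj => by ring
        push_cast
        rw [hfac, h2, pow_succ, pow_succ]
        field_simp
      rw [heq]
      apply summable_sum
      intro j hj
      exact (ih j (Finset.mem_range.mp hj)).mul_left _

lemma aux_exp (x : ℝ) : ∑' n : ℕ, x ^ n / (n.factorial : ℝ) = Real.exp x := by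
  rw [Real.exp_eq_exp_ℝ, NormedSpace.exp_eq_tsum_div]

lemma aux_mean (lam : ℝ) :
    ∑' n : ℕ, (n : ℝ) * (Real.exp (-lam) * lam ^ n / (n.factorial : ℝ)) = lam := by
  have hsum : Summable (fun n : ℕ => (n : ℝ) * (Real.exp (-lam) * lam ^ n / (n.factorial : ℝ))) := by
    have := (aux_summable lam 1).mul_left (Real.exp (-lam))
    apply this.congr
    intro n; push_cast; ring
  rw [Summable.tsum_eq_zero_add hsum]
  have h1 : ∀ n : ℕ, ((n + 1 : ℕ) : ℝ) * (Real.exp (-lam) * lam ^ (n + 1) / ((n + 1).factorial : ℝ))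
      = (Real.exp (-lam) * lam) * (lam ^ n / (n.factorial : ℝ)) := by
    intro n
    have hfac : ((n + 1).factorial : ℝ) = ((n : ℝ) + 1) * (n.factorial : ℝ) := by
      rw [Nat.factorial_succ]; push_cast; ring
    have hne : ((n : ℝ) + 1) ≠ 0 := by positivity
    have hfn : ((n.factorial : ℝ)) ≠ 0 := by positivity
    rw [hfac, pow_succ]
    push_cast
    field_simp
  simp only [h1]
  rw [tsum_mul_left, aux_exp]
  rw [mul_comm (Real.exp (-lam)) lam, mul_assoc, ← Real.exp_add]
  simp

/-- **Lower bound for even moments of a compound Poisson sum.** If `N` is Poisson of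
parameter `λ`, `(ξ_n)` are i.i.d. with law `π`, all jointly independent,
`μ(φ) = ∑_{n<N} φ(ξ_n)` and `ν = λ·π`, `p` is an even positive integer with
`∫ |φ|^p dπ < ∞` and `ν(φ^k) = 0` for every odd `k < p`, then `E[μ(φ)^p] ≥ ν(φ^p)`. -/
theorem stmt_3 {Ω : Type*} [MeasurableSpace Ω] (P : Measure Ω) [IsProbabilityMeasure P]
    {S : Type*} [MeasurableSpace S] (π : Measure S) [IsProbabilityMeasure π]
    (lam : ℝ) (hlam : 0 < lam)
    (N : Ω → ℕ) (hNmeas : Measurable N)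
    (hNpois : ∀ n : ℕ,
      P {ω | N ω = n} = ENNReal.ofReal (Real.exp (-lam) * lam ^ n / n.factorial))
    (ξ : ℕ → Ω → S) (hξmeas : ∀ n, Measurable (ξ n))
    (hlaw : ∀ n, Measure.map (ξ n) P = π)
    (hiid : iIndepFun ξ P)
    (hjoint : IndepFun N (fun ω => fun n => ξ n ω) P)
    (φ : S → ℝ) (hφ : Measurable φ)
    (p : ℕ) (hp : 0 < p) (hpeven : Even p)
    (hmom : Integrable (fun s => |φ s| ^ p) π)
    (hodd : ∀ k < p, Odd k → lam * ∫ s, φ s ^ k ∂π = 0) :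
    lam * ∫ s, φ s ^ p ∂π ≤
      ∫ ω, (∑ n ∈ Finset.range (N ω), φ (ξ n ω)) ^ p ∂P := by
  classical
  set m : ℕ → ℝ := fun k => ∫ s, φ s ^ k ∂π with hm
  have hmodd : ∀ k, k < p → Odd k → m k = 0 := by
    intro k hk hko
    have := hodd k hk hko
    exact (mul_eq_zero.mp this).resolve_left hlam.ne'
  have hm0 : m 0 = 1 := by simp [hm]
  have hmeven : ∀ k, Even k → 0 ≤ m k :=
    fun k hk => integral_nonneg fun s => hk.pow_nonneg _
  -- integrability of φ^k for k ≤ p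
  have hbnd : ∀ k, k ≤ p → ∀ s : S, |φ s ^ k| ≤ 1 + |φ s| ^ p := by
    intro k hk s
    rw [abs_pow]
    have h0 : (0:ℝ) ≤ |φ s| := abs_nonneg _
    have hppos : (0:ℝ) ≤ |φ s| ^ p := by positivity
    rcases le_total (|φ s|) 1 with h | h
    · have : |φ s| ^ k ≤ 1 ^ k := pow_le_pow_left₀ h0 h k
      simp only [one_pow] at this
      linarith
    · have : |φ s| ^ k ≤ |φ s| ^ p := pow_le_pow_right₀ h hk
      linarith
  have hπint : ∀ k, k ≤ p → Integrable (fun s => φ s ^ k) π := by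
    intro k hk
    refine Integrable.mono ((integrable_const (1:ℝ)).add hmom)
      ((hφ.pow_const k).aestronglyMeasurable) (ae_of_all _ fun s => ?_)
    have h1 := hbnd k hk s
    have h2 : (0:ℝ) ≤ 1 + |φ s| ^ p := by positivity
    simpa [Real.norm_eq_abs, abs_of_nonneg h2] using h1
  -- the constant A
  set A : ℝ := 1 + ∫ s, |φ s| ^ p ∂π with hA
  have hA1 : (1:ℝ) ≤ A := by
    have : 0 ≤ ∫ s, |φ s| ^ p ∂π := integral_nonneg fun s => by positivity
    simp only [hA]; linarith
  have hA0 : (0:ℝ) ≤ A := le_trans zero_le_one hA1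
  have hmA : ∀ k, k ≤ p → |m k| ≤ A ^ k := by
    intro k hk
    rcases Nat.eq_zero_or_pos k with rfl | hkpos
    · simp [hm0]
    · have h1 : |m k| ≤ ∫ s, |φ s ^ k| ∂π := by
        simpa [Real.norm_eq_abs] using norm_integral_le_integral_norm (fun s => φ s ^ k) (μ := π)
      have h2 : ∫ s, |φ s ^ k| ∂π ≤ ∫ s, (1 + |φ s| ^ p) ∂π := by
        refine integral_mono (hπint k hk).abs ((integrable_const (1:ℝ)).add hmom) ?_
        intro s; exact hbnd k hk s
      have h3 : ∫ s, (1 + |φ s| ^ p) ∂π = A := by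
        rw [integral_add (integrable_const _) hmom]
        simp [hA]
      have h4 : A ≤ A ^ k := le_self_pow₀ hA1 hkpos.ne'
      calc |m k| ≤ ∫ s, |φ s ^ k| ∂π := h1
        _ ≤ A := h2.trans_eq h3
        _ ≤ A ^ k := h4
  -- the i.i.d. real variables
  set Y : ℕ → Ω → ℝ := fun i ω => φ (ξ i ω) with hY
  have hYmeas : ∀ i, Measurable (Y i) := fun i => hφ.comp (hξmeas i)
  have hYint : ∀ i k, k ≤ p → Integrable (fun ω => Y i ω ^ k) P := by
    intro i k hk
    have h := hπint k hk
    rw [← hlaw i] at h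
    exact (integrable_map_measure ((hφ.pow_const k).aestronglyMeasurable)
      (hξmeas i).aemeasurable).mp h
  have hYmom : ∀ i k, (∫ ω, Y i ω ^ k ∂P) = m k := by
    intro i k
    simp only [hm]
    rw [← hlaw i, integral_map (hξmeas i).aemeasurable
      ((hφ.pow_const k).aestronglyMeasurable)]
  have hYindep : iIndepFun Y P :=
    hiid.comp (fun _ => φ) (fun _ => hφ)
  -- partial sums
  set SY : ℕ → Ω → ℝ := fun n => ∑ i ∈ Finset.range n, Y i with hSY
  have hSYapp : ∀ n ω, SY n ω = ∑ i ∈ Finset.range n, Y i ω := by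
    intro n ω; simp [hSY]
  have hSmeas : ∀ n, Measurable (SY n) := by
    intro n
    have he : SY n = fun ω => ∑ i ∈ Finset.range n, Y i ω := by
      funext ω; exact hSYapp n ω
    rw [he]
    exact Finset.measurable_sum _ fun i _ => hYmeas i
  have hSind : ∀ n, IndepFun (SY n) (Y n) P := fun n =>
    hYindep.indepFun_finsetSum_of_notMem hYmeas Finset.notMem_range_self
  -- the key induction
  have key : ∀ n : ℕ,
      (∀ k, k ≤ p → Integrable (fun ω => SY n ω ^ k) P) ∧
      (∀ k, k ≤ p → |∫ ω, SY n ω ^ k ∂P| ≤ ((n : ℝ) * A) ^ k) ∧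
      (∀ k, k ≤ p → Even k → 0 ≤ ∫ ω, SY n ω ^ k ∂P) ∧
      (n : ℝ) * m p ≤ ∫ ω, SY n ω ^ p ∂P := by
    intro n
    induction n with
    | zero =>
      have h0 : ∀ ω, SY 0 ω = 0 := by intro ω; simp [hSYapp]
      have hint : ∀ k, Integrable (fun ω => SY 0 ω ^ k) P := by
        intro k
        simp only [h0]
        exact integrable_const _
      have hval : ∀ k, (∫ ω, SY 0 ω ^ k ∂P) = (0:ℝ) ^ k := by
        intro k
        simp only [h0]
        simp
      refine ⟨fun k _ => hint k, fun k _ => ?_, fun k _ _ => ?_, ?_⟩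
      · rw [hval k]
        simp only [Nat.cast_zero, zero_mul]
        rcases Nat.eq_zero_or_pos k with rfl | hk
        · simp
        · simp [zero_pow hk.ne']
      · rw [hval k]
        positivity
      · rw [hval p]
        simp [zero_pow hp.ne']
    | succ n ih =>
      obtain ⟨ihInt, ihAbs, ihPos, ihP⟩ := ih
      have hSA : ∀ ω, SY (n + 1) ω = SY n ω + Y n ω := by
        intro ω
        rw [hSYapp, hSYapp, Finset.sum_range_succ]
      have hexp : ∀ k, (fun ω => SY (n + 1) ω ^ k)
          = fun ω => ∑ j ∈ Finset.range (k + 1),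
              SY n ω ^ j * Y n ω ^ (k - j) * (k.choose j : ℝ) := by
        intro k; funext ω; rw [hSA ω, add_pow]
      have hindpow : ∀ j l : ℕ,
          IndepFun (fun ω => SY n ω ^ j) (fun ω => Y n ω ^ l) P := by
        intro j l
        exact (hSind n).comp (measurable_id.pow_const j) (measurable_id.pow_const l)
      have htermInt : ∀ k, k ≤ p → ∀ j ∈ Finset.range (k + 1),
          Integrable (fun ω => SY n ω ^ j * Y n ω ^ (k - j) * (k.choose j : ℝ)) P := by
        intro k hk j hj
        have hj' : j ≤ k := Nat.lt_succ_iff.mp (Finset.mem_range.mp hj)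
        have h1 : Integrable ((fun ω => SY n ω ^ j) * fun ω => Y n ω ^ (k - j)) P :=
          (hindpow j (k - j)).integrable_mul (ihInt j (hj'.trans hk))
            (hYint n _ ((Nat.sub_le _ _).trans hk))
        exact (h1.mul_const _)
      have hIntSucc : ∀ k, k ≤ p → Integrable (fun ω => SY (n + 1) ω ^ k) P := by
        intro k hk
        rw [hexp k]
        exact integrable_finset_sum _ (htermInt k hk)
      have hval : ∀ k, k ≤ p → (∫ ω, SY (n + 1) ω ^ k ∂P)
          = ∑ j ∈ Finset.range (k + 1),
              (∫ ω, SY n ω ^ j ∂P) * m (k - j) * (k.choose j : ℝ) := by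
        intro k hk
        rw [hexp k, integral_finset_sum _ (htermInt k hk)]
        refine Finset.sum_congr rfl fun j hj => ?_
        have hj' : j ≤ k := Nat.lt_succ_iff.mp (Finset.mem_range.mp hj)
        rw [integral_mul_const]
        congr 1
        have h := IndepFun.integral_fun_mul_eq_mul_integral (hindpow j (k - j))
          (ihInt j (hj'.trans hk)).aestronglyMeasurable (hYint n _ ((Nat.sub_le _ _).trans hk)).aestronglyMeasurable
        rw [← hYmom n (k - j)]
        exact h
      have hterm_nonneg : ∀ k, k ≤ p → Even k → ∀ j ∈ Finset.range (k + 1),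
          0 ≤ (∫ ω, SY n ω ^ j ∂P) * m (k - j) * (k.choose j : ℝ) := by
        intro k hk hke j hj
        have hj' : j ≤ k := Nat.lt_succ_iff.mp (Finset.mem_range.mp hj)
        rcases Nat.even_or_odd j with hje | hjo
        · have h1 : 0 ≤ ∫ ω, SY n ω ^ j ∂P := ihPos j (hj'.trans hk) hje
          have h2 : Even (k - j) := (Nat.even_sub hj').mpr (iff_of_true hke hje)
          exact mul_nonneg (mul_nonneg h1 (hmeven _ h2)) (Nat.cast_nonneg _)
        · have h2 : Odd (k - j) := Nat.Even.sub_odd hj' hke hjo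
          have h3 : k - j < p := by
            have := hjo.pos
            omega
          rw [hmodd _ h3 h2]
          simp
      have hAbsSucc : ∀ k, k ≤ p →
          |∫ ω, SY (n + 1) ω ^ k ∂P| ≤ (((n : ℕ) + 1 : ℝ) * A) ^ k := by
        intro k hk
        rw [hval k hk]
        calc |∑ j ∈ Finset.range (k + 1), (∫ ω, SY n ω ^ j ∂P) * m (k - j) * (k.choose j : ℝ)|
            ≤ ∑ j ∈ Finset.range (k + 1),
              |(∫ ω, SY n ω ^ j ∂P) * m (k - j) * (k.choose j : ℝ)| :=
              Finset.abs_sum_le_sum_abs _ _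
          _ ≤ ∑ j ∈ Finset.range (k + 1),
              ((n : ℝ) * A) ^ j * A ^ (k - j) * (k.choose j : ℝ) := by
              refine Finset.sum_le_sum fun j hj => ?_
              have hj' : j ≤ k := Nat.lt_succ_iff.mp (Finset.mem_range.mp hj)
              rw [abs_mul, abs_mul]
              have hc : |(k.choose j : ℝ)| = (k.choose j : ℝ) := abs_of_nonneg (Nat.cast_nonneg _)
              rw [hc]
              refine mul_le_mul_of_nonneg_right ?_ (Nat.cast_nonneg _)
              refine mul_le_mul (ihAbs j (hj'.trans hk)) (hmA _ ((Nat.sub_le _ _).trans hk))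
                (abs_nonneg _) (by positivity)
          _ = ((n : ℝ) * A + A) ^ k := (add_pow _ _ _).symm
          _ = (((n : ℕ) + 1 : ℝ) * A) ^ k := by push_cast; ring_nf
      have hPosSucc : ∀ k, k ≤ p → Even k → 0 ≤ ∫ ω, SY (n + 1) ω ^ k ∂P := by
        intro k hk hke
        rw [hval k hk]
        exact Finset.sum_nonneg (hterm_nonneg k hk hke)
      have hPSucc : ((n : ℕ) + 1 : ℝ) * m p ≤ ∫ ω, SY (n + 1) ω ^ p ∂P := by
        rw [hval p le_rfl, Finset.sum_range_succ]
        have hTp : (∫ ω, SY n ω ^ p ∂P) * m (p - p) * (p.choose p : ℝ)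
            = ∫ ω, SY n ω ^ p ∂P := by
          simp [Nat.sub_self, hm0]
        have hT0 : (∫ ω, SY n ω ^ 0 ∂P) * m (p - 0) * (p.choose 0 : ℝ) = m p := by
          simp
        have hrest : m p ≤ ∑ j ∈ Finset.range p,
            (∫ ω, SY n ω ^ j ∂P) * m (p - j) * (p.choose j : ℝ) := by
          have h0mem : (0 : ℕ) ∈ Finset.range p := Finset.mem_range.mpr hp
          calc m p = (∫ ω, SY n ω ^ 0 ∂P) * m (p - 0) * (p.choose 0 : ℝ) := hT0.symm
            _ ≤ ∑ j ∈ Finset.range p,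
                (∫ ω, SY n ω ^ j ∂P) * m (p - j) * (p.choose j : ℝ) := by
              refine Finset.single_le_sum (f := fun j => (∫ ω, SY n ω ^ j ∂P) * m (p - j) * (p.choose j : ℝ)) (fun j hj => ?_) h0mem
              exact hterm_nonneg p le_rfl hpeven j
                (Finset.mem_range.mpr ((Finset.mem_range.mp hj).trans p.lt_succ_self))
        have h2 : (n : ℝ) * m p ≤ (∫ ω, SY n ω ^ p ∂P) * m (p - p) * (p.choose p : ℝ) := by
          rw [hTp]; exact ihP
        push_cast
        linarith
      exact ⟨hIntSucc, by push_cast at hAbsSucc ⊢; exact hAbsSucc, hPosSucc,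
        by push_cast at hPSucc ⊢; exact hPSucc⟩
  -- measurability of the compound sum
  have hjointmeas : Measurable (fun ω => (fun i => ξ i ω)) :=
    measurable_pi_lambda _ hξmeas
  have hGmeas0 : ∀ n : ℕ, Measurable (fun v : ℕ → S => ∑ i ∈ Finset.range n, φ (v i)) :=
    fun n => Finset.measurable_sum _ fun i _ => hφ.comp (measurable_pi_apply i)
  have hFmeas : Measurable (fun ω => ∑ i ∈ Finset.range (N ω), φ (ξ i ω)) := by
    have h2 : Measurable (fun q : (ℕ → S) × ℕ => ∑ i ∈ Finset.range q.2, φ (q.1 i)) :=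
      measurable_from_prod_countable_left fun n => hGmeas0 n
    exact h2.comp (hjointmeas.prodMk hNmeas)
  have hFnonneg : ∀ ω, 0 ≤ (∑ i ∈ Finset.range (N ω), φ (ξ i ω)) ^ p :=
    fun ω => hpeven.pow_nonneg _
  -- decomposition over the values of N
  set g : ℕ → Ω → ENNReal := fun n =>
    Set.indicator {ω | N ω = n} (fun ω => ENNReal.ofReal (SY n ω ^ p)) with hg
  have hgmeas : ∀ n, Measurable (g n) := by
    intro n
    exact (ENNReal.measurable_ofReal.comp ((hSmeas n).pow_const p)).indicator
      (hNmeas (measurableSet_singleton n))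
  have hdecomp : (fun ω => ENNReal.ofReal ((∑ i ∈ Finset.range (N ω), φ (ξ i ω)) ^ p))
      = fun ω => ∑' n, g n ω := by
    funext ω
    rw [tsum_eq_single (N ω) ?_]
    · have hmem : ω ∈ {ω' | N ω' = N ω} := rfl
      simp only [hg, Set.indicator_of_mem hmem]
      congr 1
      rw [hSYapp]
    · intro n hn
      have : ω ∉ {ω' | N ω' = n} := fun h => hn (Eq.symm h)
      simp only [hg]
      exact Set.indicator_of_notMem this _
  -- factorization by independence
  have hfactor : ∀ n, ∫⁻ ω, g n ω ∂P
      = P {ω | N ω = n} * ENNReal.ofReal (∫ ω, SY n ω ^ p ∂P) := by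
    intro n
    have hprod : ∀ ω, g n ω
        = (Set.indicator {ω' | N ω' = n} (1 : Ω → ENNReal) ω)
          * ENNReal.ofReal (SY n ω ^ p) := by
      intro ω
      by_cases h : N ω = n
      · have hmem : ω ∈ {ω' | N ω' = n} := h
        simp [hg, Set.indicator_of_mem hmem]
      · have hmem : ω ∉ {ω' | N ω' = n} := h
        simp [hg, Set.indicator_of_notMem hmem]
    have hmeasf : Measurable (Set.indicator {ω' | N ω' = n} (1 : Ω → ENNReal)) :=
      measurable_const.indicator (hNmeas (measurableSet_singleton n))
    have hmeasg : Measurable (fun ω => ENNReal.ofReal (SY n ω ^ p)) :=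
      ENNReal.measurable_ofReal.comp ((hSmeas n).pow_const p)
    have hindep : IndepFun (Set.indicator {ω' | N ω' = n} (1 : Ω → ENNReal))
        (fun ω => ENNReal.ofReal (SY n ω ^ p)) P := by
      have hcomp := hjoint.comp (φ := fun k : ℕ => if k = n then (1 : ENNReal) else 0)
        (ψ := fun v : ℕ → S => ENNReal.ofReal ((∑ i ∈ Finset.range n, φ (v i)) ^ p))
        Measurable.of_discrete
        (ENNReal.measurable_ofReal.comp ((hGmeas0 n).pow_const p))
      have he1 : (fun k : ℕ => if k = n then (1 : ENNReal) else 0) ∘ N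
          = Set.indicator {ω' | N ω' = n} (1 : Ω → ENNReal) := by
        funext ω
        by_cases h : N ω = n
        · simp [Function.comp, h, Set.indicator_of_mem (show ω ∈ {ω' | N ω' = n} from h)]
        · simp [Function.comp, h, Set.indicator_of_notMem (show ω ∉ {ω' | N ω' = n} from h)]
      have he2 : (fun v : ℕ → S => ENNReal.ofReal ((∑ i ∈ Finset.range n, φ (v i)) ^ p))
          ∘ (fun ω => fun i => ξ i ω) = fun ω => ENNReal.ofReal (SY n ω ^ p) := by
        funext ω
        simp only [Function.comp]
        congr 1
        rw [hSYapp]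
      rw [he1, he2] at hcomp
      exact hcomp
    calc ∫⁻ ω, g n ω ∂P
        = ∫⁻ ω, ((Set.indicator {ω' | N ω' = n} (1 : Ω → ENNReal))
            * fun ω => ENNReal.ofReal (SY n ω ^ p)) ω ∂P := by
          exact lintegral_congr fun ω => hprod ω
      _ = (∫⁻ ω, Set.indicator {ω' | N ω' = n} (1 : Ω → ENNReal) ω ∂P)
            * ∫⁻ ω, ENNReal.ofReal (SY n ω ^ p) ∂P :=
          lintegral_mul_eq_lintegral_mul_lintegral_of_indepFun hmeasf hmeasg hindep
      _ = P {ω | N ω = n} * ENNReal.ofReal (∫ ω, SY n ω ^ p ∂P) := by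
          have hset : MeasurableSet {ω' | N ω' = n} := hNmeas (measurableSet_singleton n)
          rw [lintegral_indicator_one hset]
          congr 1
          rw [ofReal_integral_eq_lintegral_ofReal ((key n).1 p le_rfl)
            (ae_of_all _ fun ω => hpeven.pow_nonneg _)]
  have hSpabs : ∀ n : ℕ, ∫ ω, SY n ω ^ p ∂P ≤ ((n : ℝ) * A) ^ p :=
    fun n => (le_abs_self _).trans ((key n).2.1 p le_rfl)
  have hSplow : ∀ n : ℕ, (n : ℝ) * m p ≤ ∫ ω, SY n ω ^ p ∂P := fun n => (key n).2.2.2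
  -- total lintegral
  have hlin : ∫⁻ ω, ENNReal.ofReal ((∑ i ∈ Finset.range (N ω), φ (ξ i ω)) ^ p) ∂P
      = ∑' n, P {ω | N ω = n} * ENNReal.ofReal (∫ ω, SY n ω ^ p ∂P) := by
    calc ∫⁻ ω, ENNReal.ofReal ((∑ i ∈ Finset.range (N ω), φ (ξ i ω)) ^ p) ∂P
        = ∫⁻ ω, ∑' n, g n ω ∂P := by rw [lintegral_congr fun ω => congrFun hdecomp ω]
      _ = ∑' n, ∫⁻ ω, g n ω ∂P := lintegral_tsum fun n => (hgmeas n).aemeasurable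
      _ = ∑' n, P {ω | N ω = n} * ENNReal.ofReal (∫ ω, SY n ω ^ p ∂P) := tsum_congr hfactor
  -- Poisson weights
  set c : ℕ → ℝ := fun n => Real.exp (-lam) * lam ^ n / n.factorial with hc
  have hcpos : ∀ n, 0 ≤ c n := by
    intro n
    have := Real.exp_pos (-lam)
    have := pow_nonneg hlam.le n
    positivity
  have hcupper : Summable (fun n => c n * ((n : ℝ) * A) ^ p) := by
    have h := (aux_summable lam p).mul_left (Real.exp (-lam) * A ^ p)
    apply h.congr
    intro n
    simp only [hc]
    rw [mul_pow]
    ring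
  have hupper : (∑' n, P {ω | N ω = n} * ENNReal.ofReal (∫ ω, SY n ω ^ p ∂P)) ≠ ⊤ := by
    have hb : ∀ n, P {ω | N ω = n} * ENNReal.ofReal (∫ ω, SY n ω ^ p ∂P)
        ≤ ENNReal.ofReal (c n * ((n : ℝ) * A) ^ p) := by
      intro n
      rw [hNpois n, ← ENNReal.ofReal_mul (hcpos n)]
      exact ENNReal.ofReal_le_ofReal (mul_le_mul_of_nonneg_left (hSpabs n) (hcpos n))
    refine ne_top_of_le_ne_top ?_ (ENNReal.tsum_le_tsum hb)
    rw [← ENNReal.ofReal_tsum_of_nonneg (fun n => mul_nonneg (hcpos n) (by positivity)) hcupper]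
    exact ENNReal.ofReal_ne_top
  have hlower : ENNReal.ofReal (lam * m p)
      ≤ ∑' n, P {ω | N ω = n} * ENNReal.ofReal (∫ ω, SY n ω ^ p ∂P) := by
    have hs : Summable (fun n : ℕ => (n : ℝ) * c n * m p) := by
      have h := ((aux_summable lam 1).mul_left (Real.exp (-lam))).mul_right (m p)
      apply h.congr
      intro n
      simp only [hc]
      push_cast
      ring
    have heq : lam * m p = ∑' n : ℕ, (n : ℝ) * c n * m p := by
      rw [tsum_mul_right]
      congr 1
      exact (aux_mean lam).symm
    rw [heq, ENNReal.ofReal_tsum_of_nonneg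
      (fun n => mul_nonneg (mul_nonneg (Nat.cast_nonneg _) (hcpos n)) (hmeven p hpeven)) hs]
    refine ENNReal.tsum_le_tsum fun n => ?_
    rw [hNpois n]
    have h1 : (n : ℝ) * c n * m p = c n * ((n : ℝ) * m p) := by ring
    rw [h1, ENNReal.ofReal_mul (hcpos n)]
    exact mul_le_mul_right (ENNReal.ofReal_le_ofReal (hSplow n)) _
  -- conclusion
  rw [integral_eq_lintegral_of_nonneg_ae (ae_of_all _ hFnonneg)
    ((hFmeas.pow_const p).aestronglyMeasurable)]
  rw [hlin]
  exact (ENNReal.ofReal_le_iff_le_toReal hupper).mp hlower
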